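/- Fix a > 1, λ ∈ (0,1), and a sequence (X_i)_{i≥1} of positive reals, and let A′ be the associated reordered on/off process with cycle endpoints T_N = (a/λ)·Σ_{i=1}^N X_i and queue Q(t) = sup_{0≤s≤t} ∫_s^t (A′(u) − 1) du. Then the queue drains completely within every off-period (Q(T_N) = 0 for all N) and for every N ≥ 1: ∫_0^{T_N} Q(t) dt = (a(a−1)/2) · Σ_{i=1}^N X_i². -/

import Mathlib

open MeasureTheory Set Finset

lemma int_piece (f : ℝ → ℝ) (c d k s t : ℝ) (h : ∀ v, c ≤ v → v < d → f v = k)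
    (hcs : c ≤ s) (hst : s ≤ t) (htd : t ≤ d) :
    IntervalIntegrable f volume s t ∧ (∫ v in s..t, f v) = k * (t - s) := by
  have h1 : ∀ᵐ v : ℝ, v ≠ t := by
    rw [ae_iff]; simp only [not_not, Set.setOf_eq_eq_singleton]
    exact measure_singleton t
  have hae : f =ᵐ[volume.restrict (Set.Ioc s t)] fun _ => k := by
    filter_upwards [ae_restrict_mem measurableSet_Ioc, ae_restrict_of_ae h1] with v hv hne
    exact h v (hcs.trans hv.1.le) ((lt_of_le_of_ne hv.2 hne).trans_le htd)
  constructor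
  · rw [intervalIntegrable_iff, uIoc_of_le hst]
    exact (integrableOn_const measure_Ioc_lt_top.ne).congr hae.symm
  · have : (∫ v in s..t, f v) = ∫ _v in s..t, k := by
      apply intervalIntegral.integral_congr_ae
      rw [uIoc_of_le hst]
      filter_upwards [h1] with v hne hv
      exact h v (hcs.trans hv.1.le) ((lt_of_le_of_ne hv.2 hne).trans_le htd)
    rw [this, intervalIntegral.integral_const, smul_eq_mul, mul_comm]

lemma int_congr (f g : ℝ → ℝ) (s t : ℝ) (h : Set.EqOn f g (Set.uIcc s t))
    (hg : IntervalIntegrable g volume s t) : IntervalIntegrable f volume s t := by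
  rw [intervalIntegrable_iff] at *
  exact hg.congr_fun (fun v hv => (h (Set.uIoc_subset_uIcc hv)).symm) measurableSet_uIoc

theorem stmt_2 (a lam : ℝ) (ha : 1 < a) (hlam : lam ∈ Set.Ioo (0:ℝ) 1)
    (X : ℕ → ℝ) (hX : ∀ i, 0 < X i)
    (T : ℕ → ℝ) (hT : ∀ N, T N = (a / lam) * ∑ i ∈ Finset.range N, X i)
    (A : ℝ → ℝ)
    (hAon : ∀ i, ∀ t, T i ≤ t → t < T i + X i → A t = a)
    (hAoff : ∀ i, ∀ t, T i + X i ≤ t → t < T (i + 1) → A t = 0)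
    (Q : ℝ → ℝ)
    (hQ : ∀ t, Q t = ⨆ u : Set.Icc (0:ℝ) t, ∫ v in (u : ℝ)..t, (A v - 1)) :
    (∀ N, Q (T N) = 0) ∧
    (∀ N, 1 ≤ N →
      ∫ t in (0:ℝ)..(T N), Q t = (a * (a - 1) / 2) * ∑ i ∈ Finset.range N, (X i) ^ 2) := by
  obtain ⟨hl0, hl1⟩ := hlam
  have ha0 : (0:ℝ) < a := lt_trans one_pos ha
  have hr : a < a / lam := by rw [lt_div_iff₀ hl0]; nlinarith
  have hr0 : 0 < a / lam := div_pos ha0 hl0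
  have hT0 : T 0 = 0 := by simp [hT]
  have hTs : ∀ i, T (i+1) = T i + (a/lam) * X i := by
    intro i; rw [hT, hT, Finset.sum_range_succ]; ring
  have hm1 : ∀ i, T i + X i ≤ T i + a * X i := fun i => by nlinarith [hX i]
  have hm2 : ∀ i, T i + a * X i ≤ T (i+1) := fun i => by
    rw [hTs]; nlinarith [hX i]
  have hon : ∀ i, T i < T i + X i := fun i => by linarith [hX i]
  have hcyc : ∀ i, T i < T (i+1) := fun i => (hon i).trans_le ((hm1 i).trans (hm2 i))
  have hTmono : Monotone T := monotone_nat_of_le_succ (fun i => (hcyc i).le)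
  have hT0le : ∀ i, 0 ≤ T i := fun i => hT0 ▸ hTmono (Nat.zero_le i)
  set f : ℝ → ℝ := fun v => A v - 1 with hf
  have onP : ∀ i s t, T i ≤ s → s ≤ t → t ≤ T i + X i →
      IntervalIntegrable f volume s t ∧ (∫ v in s..t, f v) = (a-1)*(t-s) :=
    fun i s t h1 h2 h3 => int_piece f (T i) (T i + X i) (a-1) s t
      (fun v hv1 hv2 => by simp [hf, hAon i v hv1 hv2]) h1 h2 h3
  have offP : ∀ i s t, T i + X i ≤ s → s ≤ t → t ≤ T (i+1) →
      IntervalIntegrable f volume s t ∧ (∫ v in s..t, f v) = (-1)*(t-s) :=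
    fun i s t h1 h2 h3 => int_piece f (T i + X i) (T (i+1)) (-1) s t
      (fun v hv1 hv2 => by simp [hf, hAoff i v hv1 hv2]) h1 h2 h3
  have cycP : ∀ i s t, T i ≤ s → s ≤ t → t ≤ T (i+1) →
      IntervalIntegrable f volume s t ∧ (∫ v in s..t, f v) =
        ((a-1) * min t (T i + X i) - max t (T i + X i))
          - ((a-1) * min s (T i + X i) - max s (T i + X i)) := by
    intro i s t h1 h2 h3
    rcases le_total t (T i + X i) with h | h
    · obtain ⟨hi, hv⟩ := onP i s t h1 h2 h
      refine ⟨hi, ?_⟩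
      rw [hv, min_eq_left h, min_eq_left (h2.trans h), max_eq_right h,
        max_eq_right (h2.trans h)]
      ring
    · rcases le_total (T i + X i) s with h' | h'
      · obtain ⟨hi, hv⟩ := offP i s t h' h2 h3
        refine ⟨hi, ?_⟩
        rw [hv, min_eq_right h, min_eq_right h', max_eq_left h, max_eq_left h']
        ring
      · obtain ⟨hi1, hv1⟩ := onP i s (T i + X i) h1 h' le_rfl
        obtain ⟨hi2, hv2⟩ := offP i (T i + X i) t le_rfl h h3
        refine ⟨hi1.trans hi2, ?_⟩
        rw [← intervalIntegral.integral_add_adjacent_intervals hi1 hi2, hv1, hv2,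
          min_eq_right h, min_eq_left h', max_eq_left h, max_eq_right h']
        ring
  have intT : ∀ j, IntervalIntegrable f volume 0 (T j) := by
    intro j; induction j with
    | zero =>
      rw [hT0]
    | succ j ih => exact ih.trans (cycP j (T j) (T (j+1)) le_rfl (hcyc j).le le_rfl).1
  have locate : ∀ N t, 0 ≤ t → t ≤ T (N+1) → ∃ i, i ≤ N ∧ T i ≤ t ∧ t ≤ T (i+1) := by
    intro N; induction N with
    | zero => exact fun t h1 h2 => ⟨0, le_rfl, hT0 ▸ h1, h2⟩
    | succ N ih =>
      intro t h1 h2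
      rcases le_total t (T (N+1)) with h | h
      · obtain ⟨i, hi, h3, h4⟩ := ih t h1 h
        exact ⟨i, hi.trans (Nat.le_succ N), h3, h4⟩
      · exact ⟨N+1, le_rfl, h, h2⟩
  have int0t : ∀ i t, T i ≤ t → t ≤ T (i+1) → IntervalIntegrable f volume 0 t :=
    fun i t h1 h2 => (intT i).trans (cycP i (T i) t le_rfl h1 h2).1
  set F : ℝ → ℝ := fun t => ∫ v in (0:ℝ)..t, f v with hFdef
  have Fdiff : ∀ u t, IntervalIntegrable f volume 0 u → IntervalIntegrable f volume 0 t →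
      (∫ v in u..t, f v) = F t - F u :=
    fun u t hu ht => (intervalIntegral.integral_interval_sub_left ht hu).symm
  have FT : ∀ i, F (T i) = (lam - 1) * T i := by
    intro i; induction i with
    | zero => rw [hT0]; simp [hFdef]
    | succ i ih =>
      have hv := (cycP i (T i) (T (i+1)) le_rfl (hcyc i).le le_rfl).2
      have hd := Fdiff (T i) (T (i+1)) (intT i) (intT (i+1))
      rw [hv, min_eq_right ((hm1 i).trans (hm2 i)), min_eq_left (hon i).le,
        max_eq_left ((hm1 i).trans (hm2 i)), max_eq_right (hon i).le, ih] at hd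
      have hts := hTs i
      have hne : lam ≠ 0 := ne_of_gt hl0
      have : F (T (i+1)) = (lam-1) * T i + ((a-1) * (T i + X i) - T (i+1)
          - ((a-1) * T i - (T i + X i))) := by linarith
      rw [this, hts]
      field_simp
      ring
  have Fcycval : ∀ i t, T i ≤ t → t ≤ T (i+1) →
      F t = (lam-1)*T i + (a-1) * (min t (T i + X i) - T i)
        - (max t (T i + X i) - (T i + X i)) := by
    intro i t h1 h2
    have hv := (cycP i (T i) t le_rfl h1 h2).2
    have hd := Fdiff (T i) t (intT i) (int0t i t h1 h2)
    rw [hv, min_eq_left (hon i).le, max_eq_right (hon i).le, FT i] at hd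
    linarith
  have hid2 : ∀ i, (lam - 1) * ((a/lam) * X i) = a * X i - (a/lam) * X i := by
    intro i; field_simp
  have Flb : ∀ i t, T i ≤ t → t ≤ T (i+1) → (lam - 1) * T (i+1) ≤ F t := by
    intro i t h1 h2
    have h2' := h2
    rw [hTs i] at h2'
    rw [Fcycval i t h1 h2, hTs i]
    rcases le_total t (T i + X i) with h | h
    · rw [min_eq_left h, max_eq_right h]
      have k1 : (a-1) * (t - T i) ≥ 0 := mul_nonneg (by linarith) (by linarith)
      have k2 : a * X i - (a/lam) * X i ≤ 0 := by nlinarith [hX i]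
      nlinarith [hid2 i]
    · rw [min_eq_right h, max_eq_left h]
      nlinarith [hid2 i]
  have FgeN : ∀ N u, 0 ≤ u → u ≤ T N → (lam - 1) * T N ≤ F u := by
    intro N u h1 h2
    cases N with
    | zero =>
      have hu : u = 0 := le_antisymm (hT0 ▸ h2) h1
      subst hu
      rw [hT0]
      simp [hFdef]
    | succ N =>
      obtain ⟨i, hi, h3, h4⟩ := locate N u h1 h2
      have h5 := Flb i u h3 h4
      have h6 : T (i+1) ≤ T (N+1) := hTmono (Nat.succ_le_succ hi)
      nlinarith
  have Fmin : ∀ i t u, T i ≤ t → t ≤ T (i+1) → 0 ≤ u → u ≤ t →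
      min (F (T i)) (F t) ≤ F u := by
    intro i t u h1 h2 h3 h4
    rcases le_total u (T i) with h | h
    · exact le_trans (min_le_left _ _) (by rw [FT i]; exact FgeN i u h3 h)
    · rcases le_total u (T i + X i) with h' | h'
      · refine le_trans (min_le_left _ _) ?_
        rw [FT i, Fcycval i u h (h4.trans h2), min_eq_left h', max_eq_right h']
        have : (a-1) * (u - T i) ≥ 0 := mul_nonneg (by linarith) (by linarith)
        linarith
      · refine le_trans (min_le_right _ _) ?_
        have htm : T i + X i ≤ t := h'.trans h4
        rw [Fcycval i u h (h4.trans h2), Fcycval i t h1 h2,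
          min_eq_right h', min_eq_right htm, max_eq_left h', max_eq_left htm]
        linarith
  have Qform : ∀ i t, T i ≤ t → t ≤ T (i+1) → Q t = max (F t - F (T i)) 0 := by
    intro i t h1 h2
    have h0t : (0:ℝ) ≤ t := (hT0le i).trans h1
    haveI : Nonempty (Set.Icc (0:ℝ) t) := ⟨⟨0, le_rfl, h0t⟩⟩
    rw [hQ t]
    have hint : ∀ u : Set.Icc (0:ℝ) t, IntervalIntegrable f volume 0 (u:ℝ) := by
      intro u
      obtain ⟨j, _, hu1, hu2⟩ := locate i (u:ℝ) u.2.1 (u.2.2.trans h2)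
      exact int0t j u hu1 hu2
    have hintt : IntervalIntegrable f volume 0 t := int0t i t h1 h2
    have hval : ∀ u : Set.Icc (0:ℝ) t, (∫ v in (u:ℝ)..t, f v) = F t - F u :=
      fun u => Fdiff u t (hint u) hintt
    apply le_antisymm
    · apply ciSup_le
      intro u
      rw [hval u]
      have hm := Fmin i t u h1 h2 u.2.1 u.2.2
      rcases min_cases (F (T i)) (F t) with ⟨he, _⟩ | ⟨he, _⟩ <;> rw [he] at hm
      · exact le_trans (by linarith) (le_max_left _ _)
      · exact le_trans (by linarith) (le_max_right _ _)
    · have hb : BddAbove (Set.range fun u : Set.Icc (0:ℝ) t => ∫ v in (u:ℝ)..t, f v) := by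
        refine ⟨F t - min (F (T i)) (F t), ?_⟩
        rintro x ⟨u, rfl⟩
        dsimp only
        rw [hval u]
        linarith [Fmin i t u h1 h2 u.2.1 u.2.2]
      rcases le_total (F t - F (T i)) 0 with h | h
      · rw [max_eq_right h]
        have h0 := le_ciSup hb (⟨t, h0t, le_rfl⟩ : Set.Icc (0:ℝ) t)
        dsimp only at h0
        rwa [intervalIntegral.integral_same] at h0
      · rw [max_eq_left h]
        have h0 := le_ciSup hb (⟨T i, hT0le i, h1⟩ : Set.Icc (0:ℝ) t)
        dsimp only at h0
        rwa [hval ⟨T i, hT0le i, h1⟩] at h0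
  have QT0 : ∀ N, Q (T N) = 0 := by
    intro N
    cases N with
    | zero =>
      rw [Qform 0 (T 0) le_rfl (hcyc 0).le]
      simp
    | succ N =>
      rw [Qform N (T (N+1)) (hcyc N).le le_rfl, FT, FT]
      have hk := mul_le_mul_of_nonpos_left (hcyc N).le (by linarith : lam - 1 ≤ 0)
      rw [max_eq_right (by linarith)]
  have key1 : ∀ i t, T i ≤ t → t ≤ T i + X i → Q t = (a-1)*(t - T i) := by
    intro i t h1 h2
    have h2' : t ≤ T (i+1) := h2.trans ((hm1 i).trans (hm2 i))
    have key : F t - F (T i) = (a-1)*(t - T i) := by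
      rw [Fcycval i t h1 h2', FT i, min_eq_left h2, max_eq_right h2]; ring
    rw [Qform i t h1 h2', key,
      max_eq_left (mul_nonneg (by linarith) (by linarith))]
  have key2 : ∀ i t, T i + X i ≤ t → t ≤ T (i+1) → Q t = max (a * X i - (t - T i)) 0 := by
    intro i t h1 h2
    have h1' : T i ≤ t := (hon i).le.trans h1
    have key : F t - F (T i) = a * X i - (t - T i) := by
      rw [Fcycval i t h1' h2, FT i, min_eq_right h1, max_eq_left h1]; ring
    rw [Qform i t h1' h2, key]
  have poly : ∀ (c k s t : ℝ), (∫ v in s..t, k * (v - c)) = k*((t^2 - s^2)/2 - c*(t-s)) := by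
    intro c k s t
    rw [intervalIntegral.integral_const_mul,
      intervalIntegral.integral_sub intervalIntegral.intervalIntegrable_id
        intervalIntegrable_const,
      integral_id, intervalIntegral.integral_const, smul_eq_mul]
    ring
  have cycQ : ∀ i, IntervalIntegrable Q volume (T i) (T (i+1)) ∧
      (∫ t in (T i)..(T (i+1)), Q t) = a*(a-1)/2 * (X i)^2 := by
    intro i
    have hmple : T i + X i ≤ T i + a * X i := hm1 i
    have hple : T i + a * X i ≤ T (i+1) := hm2 i
    have e1 : Set.EqOn Q (fun t => (a-1)*(t - T i)) (Set.uIcc (T i) (T i + X i)) := by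
      intro t ht
      rw [Set.uIcc_of_le (hon i).le] at ht
      exact key1 i t ht.1 ht.2
    have e2 : Set.EqOn Q (fun t => (-1)*(t - (T i + a * X i)))
        (Set.uIcc (T i + X i) (T i + a * X i)) := by
      intro t ht
      rw [Set.uIcc_of_le hmple] at ht
      rw [key2 i t ht.1 (ht.2.trans hple),
        max_eq_left (by linarith [ht.2])]
      ring
    have e3 : Set.EqOn Q (fun _ => (0:ℝ)) (Set.uIcc (T i + a * X i) (T (i+1))) := by
      intro t ht
      rw [Set.uIcc_of_le hple] at ht
      rw [key2 i t (hmple.trans ht.1) ht.2,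
        max_eq_right (by linarith [ht.1])]
    have c1 : Continuous (fun t : ℝ => (a-1)*(t - T i)) := by fun_prop
    have c2 : Continuous (fun t : ℝ => (-1)*(t - (T i + a * X i))) := by fun_prop
    have i1 : IntervalIntegrable Q volume (T i) (T i + X i) :=
      int_congr Q _ _ _ e1 (c1.intervalIntegrable _ _)
    have i2 : IntervalIntegrable Q volume (T i + X i) (T i + a * X i) :=
      int_congr Q _ _ _ e2 (c2.intervalIntegrable _ _)
    have i3 : IntervalIntegrable Q volume (T i + a * X i) (T (i+1)) :=
      int_congr Q _ _ _ e3 (intervalIntegrable_const)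
    refine ⟨i1.trans (i2.trans i3), ?_⟩
    rw [← intervalIntegral.integral_add_adjacent_intervals i1 (i2.trans i3),
      ← intervalIntegral.integral_add_adjacent_intervals i2 i3,
      intervalIntegral.integral_congr e1, intervalIntegral.integral_congr e2,
      intervalIntegral.integral_congr e3]
    have p1 : (∫ v in (T i)..(T i + X i), (a-1)*(v - T i))
        = (a-1)*(((T i + X i)^2 - (T i)^2)/2 - T i*((T i + X i) - T i)) := poly _ _ _ _
    have p2 : (∫ v in (T i + X i)..(T i + a * X i), (-1)*(v - (T i + a * X i)))
        = (-1)*(((T i + a * X i)^2 - (T i + X i)^2)/2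
            - (T i + a * X i)*((T i + a * X i) - (T i + X i))) := poly _ _ _ _
    rw [p1, p2, intervalIntegral.integral_const, smul_eq_mul, mul_zero]
    ring
  have tot : ∀ N, IntervalIntegrable Q volume 0 (T N) ∧
      (∫ t in (0:ℝ)..(T N), Q t) = (a*(a-1)/2) * ∑ i ∈ Finset.range N, (X i)^2 := by
    intro N
    induction N with
    | zero =>
      constructor
      · rw [hT0]
      · rw [hT0]
        simp
    | succ N ih =>
      refine ⟨ih.1.trans (cycQ N).1, ?_⟩
      rw [← intervalIntegral.integral_add_adjacent_intervals ih.1 (cycQ N).1,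
        ih.2, (cycQ N).2, Finset.sum_range_succ]
      ring
  exact ⟨QT0, fun N _ => (tot N).2⟩
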